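/- Let H be a complex Hilbert space and (φ_j)_{j∈ℕ} a Bessel family in H with bound B, and let Q be its frame operator. Assume ‖Q² − Q‖ ≤ δ for some 0 ≤ δ < 1/4. Then there exist a bounded self-adjoint operator Θ on H commuting with Q and an orthogonal projection P on H commuting with Q such that Θ Q Θ = P, ‖Q − P‖ ≤ 2δ, each vector Θφ_j lies in the range of P, and the family (Θφ_j)_{j∈ℕ} is a Parseval frame for the range of P: for every f in the range of P one has Σ_{j∈ℕ} |⟨Θφ_j, f⟩|² = ‖f‖² and f = Σ_{j∈ℕ} ⟨Θφ_j, f⟩·Θφ_j, the latter family being summable in H. -/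

import Mathlib

open scoped ComplexConjugate

lemma bessel_finset_bound {H : Type*} [NormedAddCommGroup H] [InnerProductSpace ℂ H]
    (φ : ℕ → H) (B : ℝ)
    (hBessel : ∀ f : H, Summable (fun j => ‖(inner ℂ (φ j) f : ℂ)‖ ^ 2) ∧
        ∑' j, ‖(inner ℂ (φ j) f : ℂ)‖ ^ 2 ≤ B * ‖f‖ ^ 2)
    (c : ℕ → ℂ) (s : Finset ℕ) :
    ‖∑ j ∈ s, c j • φ j‖ ^ 2 ≤ (max B 1) * ∑ j ∈ s, ‖c j‖ ^ 2 := by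
  obtain ⟨h, hh⟩ : ∃ h : H, h = ∑ j ∈ s, c j • φ j := ⟨_, rfl⟩
  rw [← hh]
  have hB1 : (0:ℝ) < max B 1 := lt_of_lt_of_le one_pos (le_max_right _ _)
  have hcs : ∀ f : H, ∑ j ∈ s, ‖(inner ℂ (φ j) f : ℂ)‖ ^ 2 ≤ (max B 1) * ‖f‖ ^ 2 := by
    intro f
    calc ∑ j ∈ s, ‖(inner ℂ (φ j) f : ℂ)‖ ^ 2 ≤ ∑' j, ‖(inner ℂ (φ j) f : ℂ)‖ ^ 2 :=
          Summable.sum_le_tsum s (fun i _ => by positivity) (hBessel f).1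
      _ ≤ B * ‖f‖ ^ 2 := (hBessel f).2
      _ ≤ (max B 1) * ‖f‖ ^ 2 := by
          have := sq_nonneg ‖f‖; nlinarith [le_max_left B 1]
  have hinner : (‖h‖ ^ 2 : ℝ) = ‖∑ j ∈ s, c j * (inner ℂ h (φ j) : ℂ)‖ := by
    have : (inner ℂ h h : ℂ) = ∑ j ∈ s, c j * (inner ℂ h (φ j) : ℂ) := by
      rw [hh]
      conv_lhs => rw [inner_sum]
      exact Finset.sum_congr rfl fun j _ => by rw [inner_smul_right]
    rw [← this, inner_self_eq_norm_sq_to_K]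
    simp [← Complex.ofReal_pow]
  have h1 : ‖h‖ ^ 2 ≤ ∑ j ∈ s, ‖c j‖ * ‖(inner ℂ (φ j) h : ℂ)‖ := by
    rw [hinner]
    refine (norm_sum_le _ _).trans ?_
    refine Finset.sum_le_sum fun j _ => ?_
    rw [norm_mul]
    exact mul_le_mul_of_nonneg_left (le_of_eq (norm_inner_symm _ _)) (norm_nonneg _)
  have h2 : (∑ j ∈ s, ‖c j‖ * ‖(inner ℂ (φ j) h : ℂ)‖) ^ 2 ≤
      (∑ j ∈ s, ‖c j‖ ^ 2) * ∑ j ∈ s, ‖(inner ℂ (φ j) h : ℂ)‖ ^ 2 :=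
    Finset.sum_mul_sq_le_sq_mul_sq s _ _
  have h3 : (‖h‖ ^ 2) ^ 2 ≤ (∑ j ∈ s, ‖c j‖ ^ 2) * ((max B 1) * ‖h‖ ^ 2) := by
    have hnn : (0:ℝ) ≤ ∑ j ∈ s, ‖c j‖ * ‖(inner ℂ (φ j) h : ℂ)‖ :=
      Finset.sum_nonneg fun j _ => mul_nonneg (norm_nonneg _) (norm_nonneg _)
    calc (‖h‖^2)^2 ≤ (∑ j ∈ s, ‖c j‖ * ‖(inner ℂ (φ j) h : ℂ)‖)^2 := by
          apply pow_le_pow_left₀ (sq_nonneg _) h1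
      _ ≤ (∑ j ∈ s, ‖c j‖ ^ 2) * ∑ j ∈ s, ‖(inner ℂ (φ j) h : ℂ)‖ ^ 2 := h2
      _ ≤ (∑ j ∈ s, ‖c j‖ ^ 2) * ((max B 1) * ‖h‖ ^ 2) := by
          apply mul_le_mul_of_nonneg_left (hcs h)
          exact Finset.sum_nonneg fun j _ => by positivity
  have hSnn : (0:ℝ) ≤ ∑ j ∈ s, ‖c j‖ ^ 2 := Finset.sum_nonneg fun j _ => sq_nonneg _
  by_cases hz : ‖h‖ ^ 2 = 0
  · rw [hz]; exact mul_nonneg hB1.le hSnn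
  · have hpos : 0 < ‖h‖ ^ 2 := lt_of_le_of_ne (sq_nonneg _) (Ne.symm hz)
    have h4 : ‖h‖ ^ 2 * ‖h‖ ^ 2 ≤ ((max B 1) * ∑ j ∈ s, ‖c j‖ ^ 2) * ‖h‖ ^ 2 := by
      calc ‖h‖ ^ 2 * ‖h‖ ^ 2 = (‖h‖ ^ 2) ^ 2 := by ring
        _ ≤ (∑ j ∈ s, ‖c j‖ ^ 2) * ((max B 1) * ‖h‖ ^ 2) := h3
        _ = ((max B 1) * ∑ j ∈ s, ‖c j‖ ^ 2) * ‖h‖ ^ 2 := by ring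
    exact le_of_mul_le_mul_right h4 hpos

lemma bessel_hasSum {H : Type*} [NormedAddCommGroup H] [InnerProductSpace ℂ H] [CompleteSpace H]
    (φ : ℕ → H) (B : ℝ)
    (hBessel : ∀ f : H, Summable (fun j => ‖(inner ℂ (φ j) f : ℂ)‖ ^ 2) ∧
        ∑' j, ‖(inner ℂ (φ j) f : ℂ)‖ ^ 2 ≤ B * ‖f‖ ^ 2)
    (Q : H →L[ℂ] H)
    (hQ : ∀ f g : H, (inner ℂ f (Q g) : ℂ) = ∑' j, (inner ℂ f (φ j) : ℂ) * (inner ℂ (φ j) g : ℂ))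
    (g : H) :
    HasSum (fun j => (inner ℂ (φ j) g : ℂ) • φ j) (Q g) := by
  set c : ℕ → ℂ := fun j => inner ℂ (φ j) g with hc
  have hc2 : Summable (fun j => ‖c j‖ ^ 2) := (hBessel g).1
  have hB1 : (0:ℝ) < max B 1 := lt_of_lt_of_le one_pos (le_max_right _ _)
  have hsummable : Summable (fun j => c j • φ j) := by
    rw [summable_iff_vanishing_norm]
    intro ε hε
    obtain ⟨s, hs⟩ := summable_iff_vanishing_norm.mp hc2 (ε ^ 2 / max B 1) (by positivity)
    refine ⟨s, fun t ht => ?_⟩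
    have h1 := bessel_finset_bound φ B hBessel c t
    have h2 := hs t ht
    have h3 : ∑ j ∈ t, ‖c j‖ ^ 2 < ε ^ 2 / max B 1 :=
      lt_of_le_of_lt (le_abs_self _) (by rwa [Real.norm_eq_abs] at h2)
    have h4 : ‖∑ j ∈ t, c j • φ j‖ ^ 2 < ε ^ 2 := by
      calc ‖∑ j ∈ t, c j • φ j‖ ^ 2 ≤ (max B 1) * ∑ j ∈ t, ‖c j‖ ^ 2 := h1
        _ < (max B 1) * (ε ^ 2 / max B 1) := mul_lt_mul_of_pos_left h3 hB1
        _ = ε ^ 2 := by field_simp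
    exact lt_of_pow_lt_pow_left₀ 2 hε.le h4
  obtain ⟨L, hL⟩ := hsummable
  have hLQ : L = Q g := by
    refine ext_inner_left ℂ fun v => ?_
    have hv : HasSum (fun j => (inner ℂ v (c j • φ j) : ℂ)) (inner ℂ v L : ℂ) :=
      hL.mapL (innerSL ℂ v)
    have hv2 : (inner ℂ v L : ℂ) = ∑' j, (inner ℂ v (φ j) : ℂ) * (inner ℂ (φ j) g : ℂ) := by
      rw [← hv.tsum_eq]
      exact tsum_congr fun j => by rw [inner_smul_right, hc]; ring
    rw [hv2, hQ v g]
  rwa [hLQ] at hL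

/-- From a Bessel family whose frame operator `Q` is an approximate projection,
one constructs a genuine orthogonal projection `P = Θ Q Θ` and a Parseval frame
`(Θ φ_j)` for the range of `P`. -/
theorem parseval_frame_from_quasi_projection
    {H : Type*} [NormedAddCommGroup H] [InnerProductSpace ℂ H] [CompleteSpace H]
    (φ : ℕ → H) (B : ℝ)
    (hBessel : ∀ f : H, Summable (fun j => ‖(inner ℂ (φ j) f : ℂ)‖ ^ 2) ∧
        ∑' j, ‖(inner ℂ (φ j) f : ℂ)‖ ^ 2 ≤ B * ‖f‖ ^ 2)
    (Q : H →L[ℂ] H)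
    (hQ : ∀ f g : H, (inner ℂ f (Q g) : ℂ) = ∑' j, (inner ℂ f (φ j) : ℂ) * (inner ℂ (φ j) g : ℂ))
    (δ : ℝ) (hδ0 : 0 ≤ δ) (hδ : δ < 1 / 4)
    (hQδ : ‖Q * Q - Q‖ ≤ δ) :
    ∃ Θ P : H →L[ℂ] H,
      IsSelfAdjoint Θ ∧ Θ * Q = Q * Θ ∧
      P * P = P ∧ IsSelfAdjoint P ∧ P * Q = Q * P ∧
      Θ * Q * Θ = P ∧ ‖Q - P‖ ≤ 2 * δ ∧
      (∀ j, Θ (φ j) ∈ LinearMap.range (P : H →ₗ[ℂ] H)) ∧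
      (∀ f ∈ LinearMap.range (P : H →ₗ[ℂ] H),
        HasSum (fun j => ‖(inner ℂ (Θ (φ j)) f : ℂ)‖ ^ 2) (‖f‖ ^ 2) ∧
        HasSum (fun j => (inner ℂ (Θ (φ j)) f : ℂ) • Θ (φ j)) f) := by
  rcases subsingleton_or_nontrivial H with hsub | hnt
  · -- trivial Hilbert space
    refine ⟨0, 0, ?_, by simp, by simp, ?_, by simp, by simp, ?_, ?_, ?_⟩
    · exact star_zero _
    · exact star_zero _
    · rw [Subsingleton.elim (Q - 0) 0, norm_zero]; linarith
    · intro j; exact ⟨0, by simp [Subsingleton.elim ((0 : H →L[ℂ] H) 0) ((0 : H →L[ℂ] H) (φ j))]⟩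
    · intro f hf
      have hf0 : f = 0 := Subsingleton.elim f 0
      subst hf0
      constructor
      · simpa using hasSum_zero
      · simpa using hasSum_zero
  -- nontrivial case
  have hsa : IsSelfAdjoint Q := by
    rw [ContinuousLinearMap.isSelfAdjoint_iff']
    refine ContinuousLinearMap.ext fun x => ?_
    refine ext_inner_left ℂ fun v => ?_
    rw [ContinuousLinearMap.adjoint_inner_right, ← inner_conj_symm (Q v) x, hQ x v, hQ v x]
    rw [starRingEnd_apply, tsum_star]
    refine tsum_congr fun j => ?_
    simp only [star_mul', RCLike.star_def, inner_conj_symm]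
    ring
  set S := spectrum ℝ Q with hS
  have hspec : ∀ t ∈ S, |t ^ 2 - t| ≤ δ := by
    intro t ht
    have h1 : cfc (fun t : ℝ => t ^ 2 - t) Q = Q ^ 2 - Q := by
      rw [cfc_sub (fun t : ℝ => t ^ 2) (fun t => t) Q, cfc_pow_id Q 2, cfc_id' ℝ Q]
    have h2 : t ^ 2 - t ∈ spectrum ℝ (Q ^ 2 - Q) := by
      rw [← h1, cfc_map_spectrum (fun t : ℝ => t ^ 2 - t) Q]
      exact ⟨t, ht, rfl⟩
    have h3 := spectrum.norm_le_norm_of_mem h2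
    rw [Real.norm_eq_abs] at h3
    refine h3.trans ?_
    rwa [sq]
  have hhalf : (2:ℝ) * δ < 1 / 2 := by linarith
  have hlow : ∀ t ∈ S, t ≤ 1 / 2 → |t| ≤ 2 * δ := by
    intro t ht hle
    have := hspec t ht
    rw [abs_le] at this ⊢
    constructor <;> nlinarith [this.1, this.2]
  have hhigh : ∀ t ∈ S, 1 / 2 < t → |t - 1| ≤ 2 * δ := by
    intro t ht hgt
    have := hspec t ht
    rw [abs_le] at this ⊢
    constructor <;> nlinarith [this.1, this.2]
  set g : ℝ → ℝ := fun t => if 1 / 2 < t then (Real.sqrt t)⁻¹ else 0 with hg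
  set χ : ℝ → ℝ := fun t => if 1 / 2 < t then (1:ℝ) else 0 with hχ
  have hSU : S ⊆ Set.Iio (1/2 : ℝ) ∪ Set.Ioi (1/2 : ℝ) := by
    intro t ht
    by_cases hle : t ≤ 1 / 2
    · left
      have := hlow t ht hle
      rw [abs_le] at this
      exact lt_of_le_of_lt this.2 hhalf
    · right; exact lt_of_not_ge hle
  have hcontU : ∀ (F : ℝ → ℝ), (∀ t : ℝ, ¬ (1/2 < t) → F t = 0) →
      (∀ᵉ (x > (1/2:ℝ)), ContinuousAt F x) →
      ContinuousOn F (Set.Iio (1/2 : ℝ) ∪ Set.Ioi (1/2 : ℝ)) := by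
    intro F h0 hca
    intro x hx
    apply ContinuousAt.continuousWithinAt
    rcases hx with hx | hx
    · have hev : F =ᶠ[nhds x] (fun _ => (0:ℝ)) := by
        filter_upwards [Iio_mem_nhds hx] with t ht
        exact h0 t (not_lt_of_gt ht)
      exact (continuousAt_congr hev).mpr continuousAt_const
    · exact hca x hx
  have hgc : ContinuousOn g S := by
    refine (hcontU g (fun t ht => if_neg ht) ?_).mono hSU
    intro x hx
    have hx0 : (0:ℝ) < x := lt_trans (by norm_num) hx
    have hca : ContinuousAt (fun t => (Real.sqrt t)⁻¹) x :=
      (Real.continuous_sqrt.continuousAt).inv₀ (by positivity)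
    have hev : g =ᶠ[nhds x] (fun t => (Real.sqrt t)⁻¹) := by
      filter_upwards [Ioi_mem_nhds hx] with t ht
      exact if_pos ht
    exact (continuousAt_congr hev).mpr hca
  have hχc : ContinuousOn χ S := by
    refine (hcontU χ (fun t ht => if_neg ht) ?_).mono hSU
    intro x hx
    have hev : χ =ᶠ[nhds x] (fun _ => (1:ℝ)) := by
      filter_upwards [Ioi_mem_nhds hx] with t ht
      exact if_pos ht
    exact (continuousAt_congr hev).mpr continuousAt_const
  have hid : ContinuousOn (fun t:ℝ => t) S := continuousOn_id
  set Θ := cfc g Q with hΘ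
  set P := cfc χ Q with hP
  have hΘsa : IsSelfAdjoint Θ := cfc_predicate g Q
  have hPsa : IsSelfAdjoint P := cfc_predicate χ Q
  have e1 : cfc (fun x => g x * x) Q = Θ * Q := by
    rw [cfc_mul g _ Q hgc hid, cfc_id' ℝ Q]
  have e1' : cfc (fun x => x * g x) Q = Q * Θ := by
    rw [cfc_mul _ g Q hid hgc, cfc_id' ℝ Q]
  have hΘQ : Θ * Q = Q * Θ := by
    rw [← e1, ← e1']
    congr 1; funext x; ring
  have hPQ : P * Q = Q * P := by
    have a1 : cfc (fun x => χ x * x) Q = P * Q := by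
      rw [cfc_mul χ _ Q hχc hid, cfc_id' ℝ Q]
    have a2 : cfc (fun x => x * χ x) Q = Q * P := by
      rw [cfc_mul _ χ Q hid hχc, cfc_id' ℝ Q]
    rw [← a1, ← a2]; congr 1; funext x; ring
  have hPP : P * P = P := by
    rw [hP, ← cfc_mul χ χ Q hχc hχc]
    apply cfc_congr; intro x _
    simp only [hχ]; split_ifs <;> ring
  have hkey : Θ * Q * Θ = P := by
    have e2 : cfc (fun x => (g x * x) * g x) Q = Θ * Q * Θ := by
      rw [cfc_mul (fun x => g x * x) g Q (hgc.mul hid) hgc, e1]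
    rw [← e2, hP]
    apply cfc_congr
    intro x _
    by_cases h : (1:ℝ)/2 < x
    · have hx0 : (0:ℝ) < x := lt_trans (by norm_num) h
      have h2 : Real.sqrt x * Real.sqrt x = x := Real.mul_self_sqrt hx0.le
      have h3 : Real.sqrt x ≠ 0 := by positivity
      simp only [hg, hχ, if_pos h]
      field_simp
      rw [sq, h2]
    · simp only [hg, hχ, if_neg h]; ring
  have hQP : ‖Q - P‖ ≤ 2 * δ := by
    have e : Q - P = cfc (fun x => x - χ x) Q := by
      rw [cfc_sub _ χ Q hid hχc, cfc_id' ℝ Q, hP]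
    rw [e]
    apply norm_cfc_le (by linarith : (0:ℝ) ≤ 2 * δ)
    intro x hx
    rw [Real.norm_eq_abs]
    by_cases h : (1:ℝ)/2 < x
    · simp only [hχ, if_pos h]; exact hhigh x hx h
    · simp only [hχ, if_neg h]; rw [sub_zero]; exact hlow x hx (le_of_not_gt h)
  have hPΘ : P * Θ = Θ := by
    rw [hP, hΘ, ← cfc_mul χ g Q hχc hgc]
    apply cfc_congr; intro x _
    simp only [hχ, hg]; split_ifs <;> ring
  have hΘadj : ∀ (x y : H), (inner ℂ (Θ x) y : ℂ) = inner ℂ x (Θ y) := fun x y => by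
    rw [← ContinuousLinearMap.adjoint_inner_left, hΘsa.adjoint_eq]
  refine ⟨Θ, P, hΘsa, hΘQ, hPP, hPsa, hPQ, hkey, hQP, ?_, ?_⟩
  · intro j
    exact ⟨Θ (φ j), ContinuousLinearMap.ext_iff.mp hPΘ (φ j)⟩
  · intro f hf
    obtain ⟨y, hy⟩ := hf
    have hPf : P f = f := by
      calc P f = (P * P) y := by rw [← hy]; rfl
        _ = P y := by rw [hPP]
        _ = f := hy
    have hTQT : Θ (Q (Θ f)) = f := by
      calc Θ (Q (Θ f)) = (Θ * Q * Θ) f := rfl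
        _ = P f := by rw [hkey]
        _ = f := hPf
    have hre : ∀ j, (inner ℂ (Θ (φ j)) f : ℂ) = inner ℂ (φ j) (Θ f) := fun j => hΘadj (φ j) f
    have hsum := (hBessel (Θ f)).1
    constructor
    · have hofReal : HasSum (fun j => ((‖(inner ℂ (φ j) (Θ f) : ℂ)‖ ^ 2 : ℝ) : ℂ))
          (((∑' j, ‖(inner ℂ (φ j) (Θ f) : ℂ)‖ ^ 2 : ℝ)) : ℂ) :=
        hsum.hasSum.mapL Complex.ofRealCLM
      have e4 : (∑' j, ((‖(inner ℂ (φ j) (Θ f) : ℂ)‖ ^ 2 : ℝ) : ℂ))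
          = (inner ℂ (Θ f) (Q (Θ f)) : ℂ) := by
        rw [hQ (Θ f) (Θ f)]
        refine tsum_congr fun j => ?_
        rw [← inner_conj_symm (Θ f) (φ j), Complex.conj_mul']
        norm_cast
      have e5 : (inner ℂ (Θ f) (Q (Θ f)) : ℂ) = ((‖f‖ ^ 2 : ℝ) : ℂ) := by
        rw [hΘadj f (Q (Θ f)), hTQT, inner_self_eq_norm_sq_to_K]
        norm_cast
      have hT : (∑' j, ‖(inner ℂ (φ j) (Θ f) : ℂ)‖ ^ 2 : ℝ) = ‖f‖ ^ 2 := by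
        have : (((∑' j, ‖(inner ℂ (φ j) (Θ f) : ℂ)‖ ^ 2 : ℝ)) : ℂ) = ((‖f‖ ^ 2 : ℝ) : ℂ) := by
          rw [← hofReal.tsum_eq, e4, e5]
        exact_mod_cast this
      have hfinal := hsum.hasSum
      rw [hT] at hfinal
      simpa only [hre] using hfinal
    · have hA := bessel_hasSum φ B hBessel Q hQ (Θ f)
      have hB2 := hA.mapL Θ
      rw [hTQT] at hB2
      simpa only [map_smul, hre] using hB2
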